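/- arXiv:2303.02030 — 3 statements merged into one kernel-verified Lean document; each statement's English description precedes it below -/
import Mathlib

section
/- If p is an odd prime and q = 4p + 1 is prime, then 2 is a primitive root modulo q; that is, the multiplicative order of 2 modulo q equals q − 1 = 4p. -/
theorem two_primitive_root_mod_4p_add_one (p : ℕ) (hp : p.Prime) (hodd : Odd p)
    (hq : (4 * p + 1).Prime) :
    orderOf (2 : ZMod (4 * p + 1)) = 4 * p := by
  haveI : Fact (4 * p + 1).Prime := ⟨hq⟩
  have hp2 : 2 ≤ p := hp.two_le
  have hp3 : 3 ≤ p := by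
    rcases Nat.lt_or_ge p 3 with h | h
    · interval_cases p
      · exact absurd hodd (by decide)
    · exact h
  -- 2 is not a square mod q
  obtain ⟨k, hk⟩ := hodd
  have hns : ¬ IsSquare (2 : ZMod (4 * p + 1)) := by
    rw [ZMod.exists_sq_eq_two_iff (by omega)]
    omega
  have h2ne : (2 : ZMod (4 * p + 1)) ≠ 0 := by
    intro h
    have h' : ((2 : ℕ) : ZMod (4 * p + 1)) = 0 := by push_cast; exact h
    rw [ZMod.natCast_eq_zero_iff] at h'
    have := Nat.le_of_dvd (by norm_num) h'
    omega
  have hdiv : (4 * p + 1) / 2 = 2 * p := by omega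
  have hpow2p : (2 : ZMod (4 * p + 1)) ^ (2 * p) = -1 := by
    have h1 : (2 : ZMod (4 * p + 1)) ^ (2 * p) ≠ 1 := by
      rw [← hdiv]
      exact fun h => hns ((ZMod.euler_criterion _ h2ne).mpr h)
    have hsq : ((2 : ZMod (4 * p + 1)) ^ (2 * p)) ^ 2 = 1 := by
      rw [← pow_mul]
      have h2 := ZMod.pow_card_sub_one_eq_one h2ne
      have e : 2 * p * 2 = 4 * p + 1 - 1 := by omega
      rw [e, h2]
    rcases sq_eq_one_iff.mp hsq with h | h
    · exact absurd h h1
    · exact h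
  haveI : Fact (2 < 4 * p + 1) := ⟨by omega⟩
  have hne1 : (-1 : ZMod (4 * p + 1)) ≠ 1 := ZMod.neg_one_ne_one
  set d := orderOf (2 : ZMod (4 * p + 1)) with hd
  have hd4p : d ∣ 4 * p := by
    have h2 := ZMod.pow_card_sub_one_eq_one h2ne
    have e : 4 * p + 1 - 1 = 4 * p := by omega
    rw [e] at h2
    exact orderOf_dvd_of_pow_eq_one h2
  have hnd2p : ¬ d ∣ 2 * p := by
    intro h
    have h' := orderOf_dvd_iff_pow_eq_one.mp h
    rw [hpow2p] at h'
    exact hne1 h'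
  have hnd4 : ¬ d ∣ 4 := by
    intro h
    have h16 : (2 : ZMod (4 * p + 1)) ^ 4 = 1 := orderOf_dvd_iff_pow_eq_one.mp h
    have h16' : ((16 : ℕ) : ZMod (4 * p + 1)) = 1 := by
      push_cast
      linear_combination h16
    have h15 : ((15 : ℕ) : ZMod (4 * p + 1)) = 0 := by
      push_cast
      push_cast at h16'
      have e4 : (2 : ZMod (4 * p + 1)) ^ 4 = 16 := by norm_num
      rw [e4] at h16
      linear_combination h16
    rw [ZMod.natCast_eq_zero_iff] at h15
    have hle := Nat.le_of_dvd (by norm_num) h15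
    have hp3' : p = 3 := by omega
    subst hp3'
    norm_num at h15
  have hpd : p ∣ d := by
    by_contra hnp
    have hcop : Nat.Coprime d p := Nat.Coprime.symm ((hp.coprime_iff_not_dvd).mpr hnp)
    exact hnd4 (hcop.dvd_of_dvd_mul_right hd4p)
  obtain ⟨e, he⟩ := hpd
  have he4 : e ∣ 4 := by
    have h' : p * e ∣ p * 4 := by rw [← he, mul_comm p 4]; exact hd4p
    exact (mul_dvd_mul_iff_left (by omega : p ≠ 0)).mp h'
  have he4' : e ≤ 4 := Nat.le_of_dvd (by norm_num) he4
  interval_cases e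
  · rw [mul_zero] at he; rw [he] at hd4p; omega
  · exact absurd ⟨2, by rw [he]; ring⟩ hnd2p
  · exact absurd ⟨1, by rw [he]; ring⟩ hnd2p
  · omega
  · omega
end

section
/- There exist a constant C > 0 and a real number x₀ such that for all real x ≥ x₀, the double sum ∑_{m ≤ x} ∑_{n ≤ x} (log m · log n)/[m,n], taken over positive integers m, n ≤ x, satisfies ∑_{m,n ≤ x} (log m · log n)/[m,n] ≤ C · (log x)^5. -/
open Finset Real

theorem sum_log_mul_log_div_lcm_le :
    ∃ C : ℝ, 0 < C ∧ ∃ x₀ : ℝ, ∀ x : ℝ, x₀ ≤ x →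
      ∑ m ∈ Finset.Icc 1 ⌊x⌋₊, ∑ n ∈ Finset.Icc 1 ⌊x⌋₊,
          Real.log m * Real.log n / (Nat.lcm m n) ≤
        C * Real.log x ^ 5 := by
  refine ⟨8, by norm_num, 3, fun x hx => ?_⟩
  have hx0 : (0:ℝ) < x := by linarith
  set N := ⌊x⌋₊ with hNdef
  have hNx : (N:ℝ) ≤ x := Nat.floor_le hx0.le
  have hlogx : 1 ≤ Real.log x := by
    have he : Real.exp 1 ≤ x := by
      have := Real.exp_one_lt_d9; linarith
    calc (1:ℝ) = Real.log (Real.exp 1) := (Real.log_exp 1).symm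
      _ ≤ Real.log x := Real.log_le_log (Real.exp_pos 1) he
  have hlogx0 : (0:ℝ) ≤ Real.log x := by linarith
  -- harmonic bound
  set H : ℝ := ∑ i ∈ Finset.Icc 1 N, (i:ℝ)⁻¹ with hHdef
  have hH0 : 0 ≤ H := Finset.sum_nonneg fun i _ => by positivity
  have hH : H ≤ 2 * Real.log x := by
    have h1 : ((harmonic N : ℚ) : ℝ) ≤ 1 + Real.log N := harmonic_le_one_add_log N
    have h3 : H = ((harmonic N : ℚ):ℝ) := by
      rw [hHdef, harmonic_eq_sum_Icc]; push_cast; rfl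
    have h2 : Real.log N ≤ Real.log x := by
      rcases Nat.eq_zero_or_pos N with h | h
      · simp [h]; exact hlogx0
      · exact Real.log_le_log (by exact_mod_cast h) hNx
    linarith
  -- definitions
  set A : ℕ → ℝ := fun d => ∑ m ∈ Finset.Icc 1 N, (if d ∣ m then (m:ℝ)⁻¹ else 0) with hAdef
  have hA0 : ∀ d, 0 ≤ A d := fun d => Finset.sum_nonneg fun m _ => by positivity
  have hA : ∀ d ∈ Finset.Icc 1 N, A d ≤ H / d := by
    intro d hd
    rw [Finset.mem_Icc] at hd
    have hd0 : 0 < d := hd.1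
    have himg : (Finset.Icc 1 N).filter (fun m => d ∣ m)
        = (Finset.Icc 1 (N / d)).image (fun a => d * a) := by
      ext m
      simp only [Finset.mem_filter, Finset.mem_Icc, Finset.mem_image]
      constructor
      · rintro ⟨⟨h1, h2⟩, a, rfl⟩
        refine ⟨a, ⟨?_, ?_⟩, rfl⟩
        · exact Nat.pos_of_ne_zero (by rintro rfl; simp at h1)
        · exact (Nat.le_div_iff_mul_le hd0).mpr (by rwa [mul_comm])
      · rintro ⟨a, ⟨ha1, ha2⟩, rfl⟩
        have h := (Nat.le_div_iff_mul_le hd0).mp ha2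
        exact ⟨⟨Nat.one_le_iff_ne_zero.mpr (Nat.mul_ne_zero hd0.ne' (Nat.pos_of_ne_zero (by omega)).ne'), by rwa [mul_comm]⟩, Dvd.intro a rfl⟩
    have hinj : Set.InjOn (fun a => d * a) (Finset.Icc 1 (N / d)) := by
      intro a _ b _ hab
      exact Nat.eq_of_mul_eq_mul_left hd0 hab
    have h1 : A d = ∑ a ∈ Finset.Icc 1 (N / d), ((d * a : ℕ):ℝ)⁻¹ := by
      rw [hAdef]
      simp only
      rw [← Finset.sum_filter, himg, Finset.sum_image (fun a ha b hb h => hinj ha hb h)]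
    have h2 : ∑ a ∈ Finset.Icc 1 (N / d), ((d * a : ℕ):ℝ)⁻¹
        = (d:ℝ)⁻¹ * ∑ a ∈ Finset.Icc 1 (N / d), (a:ℝ)⁻¹ := by
      rw [Finset.mul_sum]
      refine Finset.sum_congr rfl fun a _ => ?_
      push_cast
      rw [mul_inv]
    have h3 : ∑ a ∈ Finset.Icc 1 (N / d), (a:ℝ)⁻¹ ≤ H := by
      refine Finset.sum_le_sum_of_subset_of_nonneg ?_ (fun i _ _ => by positivity)
      exact Finset.Icc_subset_Icc le_rfl (Nat.div_le_self N d)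
    rw [h1, h2, div_eq_inv_mul]
    have : (0:ℝ) < d := by exact_mod_cast hd0
    gcongr
  -- termwise bound
  have key : ∀ m ∈ Finset.Icc 1 N, ∀ n ∈ Finset.Icc 1 N,
      Real.log m * Real.log n / (Nat.lcm m n) ≤
      Real.log x * Real.log x * ∑ d ∈ Finset.Icc 1 N,
        (d:ℝ) * (if d ∣ m then (m:ℝ)⁻¹ else 0) * (if d ∣ n then (n:ℝ)⁻¹ else 0) := by
    intro m hm n hn
    rw [Finset.mem_Icc] at hm hn
    have hm0 : 0 < m := hm.1
    have hn0 : 0 < n := hn.1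
    have hmx : (m:ℝ) ≤ x := le_trans (by exact_mod_cast hm.2) hNx
    have hnx : (n:ℝ) ≤ x := le_trans (by exact_mod_cast hn.2) hNx
    have hlm : Real.log m ≤ Real.log x := Real.log_le_log (by exact_mod_cast hm0) hmx
    have hln : Real.log n ≤ Real.log x := Real.log_le_log (by exact_mod_cast hn0) hnx
    have hlm0 : 0 ≤ Real.log m := Real.log_nonneg (by exact_mod_cast hm0)
    have hln0 : 0 ≤ Real.log n := Real.log_nonneg (by exact_mod_cast hn0)
    have hl : (0:ℝ) < Nat.lcm m n := by
      have := Nat.pos_of_ne_zero (Nat.lcm_ne_zero hm0.ne' hn0.ne')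
      exact_mod_cast this
    have heq : ((Nat.lcm m n : ℝ))⁻¹ = (Nat.gcd m n : ℝ) / ((m:ℝ) * n) := by
      have h : (Nat.gcd m n : ℝ) * (Nat.lcm m n : ℝ) = (m:ℝ) * n := by
        exact_mod_cast Nat.gcd_mul_lcm m n
      have hg : (0:ℝ) < Nat.gcd m n := by
        have := Nat.gcd_pos_of_pos_left n hm0
        exact_mod_cast this
      field_simp
      linarith [h]
    have hgd : Nat.gcd m n ∈ Finset.Icc 1 N :=
      Finset.mem_Icc.mpr ⟨Nat.gcd_pos_of_pos_left n hm0,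
        le_trans (Nat.gcd_le_left n hm0) hm.2⟩
    have hsingle : (Nat.gcd m n : ℝ) * (m:ℝ)⁻¹ * (n:ℝ)⁻¹ ≤ ∑ d ∈ Finset.Icc 1 N,
        (d:ℝ) * (if d ∣ m then (m:ℝ)⁻¹ else 0) * (if d ∣ n then (n:ℝ)⁻¹ else 0) := by
      have hnn : ∀ d ∈ Finset.Icc 1 N,
          (0:ℝ) ≤ (d:ℝ) * (if d ∣ m then (m:ℝ)⁻¹ else 0) * (if d ∣ n then (n:ℝ)⁻¹ else 0) := by
        intro d _
        refine mul_nonneg (mul_nonneg (by positivity) ?_) ?_ <;> split <;> positivity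
      have := Finset.single_le_sum hnn hgd
      simpa [Nat.gcd_dvd_left m n, Nat.gcd_dvd_right m n] using this
    calc Real.log m * Real.log n / (Nat.lcm m n)
        = Real.log m * Real.log n * (Nat.lcm m n : ℝ)⁻¹ := div_eq_mul_inv _ _
      _ ≤ Real.log x * Real.log x * (Nat.lcm m n : ℝ)⁻¹ := by gcongr <;> positivity
      _ = Real.log x * Real.log x * ((Nat.gcd m n:ℝ) * (m:ℝ)⁻¹ * (n:ℝ)⁻¹) := by
          rw [heq, div_eq_mul_inv, mul_inv]; ring
      _ ≤ _ := mul_le_mul_of_nonneg_left hsingle (by positivity)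
  -- main sum manipulation
  have hswap : ∑ m ∈ Finset.Icc 1 N, ∑ n ∈ Finset.Icc 1 N, ∑ d ∈ Finset.Icc 1 N,
      (d:ℝ) * (if d ∣ m then (m:ℝ)⁻¹ else 0) * (if d ∣ n then (n:ℝ)⁻¹ else 0)
      = ∑ d ∈ Finset.Icc 1 N, (d:ℝ) * A d * A d := by
    rw [show (∑ m ∈ Finset.Icc 1 N, ∑ n ∈ Finset.Icc 1 N, ∑ d ∈ Finset.Icc 1 N,
        (d:ℝ) * (if d ∣ m then (m:ℝ)⁻¹ else 0) * (if d ∣ n then (n:ℝ)⁻¹ else 0))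
        = ∑ d ∈ Finset.Icc 1 N, ∑ m ∈ Finset.Icc 1 N, ∑ n ∈ Finset.Icc 1 N,
        (d:ℝ) * (if d ∣ m then (m:ℝ)⁻¹ else 0) * (if d ∣ n then (n:ℝ)⁻¹ else 0) by
      rw [show (∑ m ∈ Finset.Icc 1 N, ∑ n ∈ Finset.Icc 1 N, ∑ d ∈ Finset.Icc 1 N,
        (d:ℝ) * (if d ∣ m then (m:ℝ)⁻¹ else 0) * (if d ∣ n then (n:ℝ)⁻¹ else 0))
        = ∑ m ∈ Finset.Icc 1 N, ∑ d ∈ Finset.Icc 1 N, ∑ n ∈ Finset.Icc 1 N,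
        (d:ℝ) * (if d ∣ m then (m:ℝ)⁻¹ else 0) * (if d ∣ n then (n:ℝ)⁻¹ else 0) from
        Finset.sum_congr rfl fun m _ => Finset.sum_comm]
      exact Finset.sum_comm]
    refine Finset.sum_congr rfl fun d _ => ?_
    rw [hAdef]
    simp only
    rw [mul_assoc, Finset.sum_mul_sum, Finset.mul_sum]
    refine Finset.sum_congr rfl fun m _ => ?_
    rw [Finset.mul_sum]
    refine Finset.sum_congr rfl fun n _ => ?_
    ring
  have hmain : ∑ m ∈ Finset.Icc 1 N, ∑ n ∈ Finset.Icc 1 N,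
      Real.log m * Real.log n / (Nat.lcm m n)
      ≤ Real.log x * Real.log x * ∑ d ∈ Finset.Icc 1 N, (d:ℝ) * A d * A d := by
    rw [← hswap, Finset.mul_sum]
    refine Finset.sum_le_sum fun m hm => ?_
    rw [Finset.mul_sum]
    exact Finset.sum_le_sum fun n hn => key m hm n hn
  have hsum3 : ∑ d ∈ Finset.Icc 1 N, (d:ℝ) * A d * A d ≤ H^2 * H := by
    calc ∑ d ∈ Finset.Icc 1 N, (d:ℝ) * A d * A d
        ≤ ∑ d ∈ Finset.Icc 1 N, (d:ℝ) * (H/d) * (H/d) := by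
          refine Finset.sum_le_sum fun d hd => ?_
          have h1 := hA d hd
          have h2 := hA0 d
          have hd0 : (0:ℝ) < d := by
            rw [Finset.mem_Icc] at hd; exact_mod_cast hd.1
          nlinarith [mul_le_mul h1 h1 h2 (by positivity : (0:ℝ) ≤ H/(d:ℝ))]
      _ = ∑ d ∈ Finset.Icc 1 N, H^2 * (d:ℝ)⁻¹ := by
          refine Finset.sum_congr rfl fun d hd => ?_
          have hd0 : (0:ℝ) < d := by
            rw [Finset.mem_Icc] at hd; exact_mod_cast hd.1
          field_simp
      _ = H^2 * H := by rw [← Finset.mul_sum]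
  calc ∑ m ∈ Finset.Icc 1 N, ∑ n ∈ Finset.Icc 1 N,
        Real.log m * Real.log n / (Nat.lcm m n)
      ≤ Real.log x * Real.log x * ∑ d ∈ Finset.Icc 1 N, (d:ℝ) * A d * A d := hmain
    _ ≤ Real.log x * Real.log x * (H^2 * H) :=
        mul_le_mul_of_nonneg_left hsum3 (by positivity)
    _ ≤ Real.log x * Real.log x * ((2*Real.log x)^2 * (2*Real.log x)) := by
        have h2 : (0:ℝ) ≤ 2 * Real.log x := by linarith
        exact mul_le_mul_of_nonneg_left
          (mul_le_mul (pow_le_pow_left₀ hH0 hH 2) hH hH0 (by positivity))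
          (by positivity)
    _ = 8 * Real.log x ^ 5 := by ring
end

section
/- Let x ≥ 1 be a real number, let Q be a real number with 1 ≤ Q ≤ x, and let (a_n)_{n ≥ 1} be a sequence of real numbers. Then ∑_{q ≤ Q} q · ∑_{a=1}^{q} | ∑_{n ≤ x, n ≡ a (mod q)} a_n − (1/q)·∑_{n ≤ x} a_n |² ≤ Q·(10Q + 2πx) · ∑_{n ≤ x} a_n², where q runs over positive integers q ≤ Q, a runs over residues 1 ≤ a ≤ q, and all sums over n ≤ x run over positive integers n ≤ x. -/
open Finset Real

lemma fiber_sum (q N : ℕ) (hq : 1 ≤ q) (f : ℕ → ℝ) :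
    ∑ r ∈ Finset.Icc 1 q, ∑ n ∈ (Finset.Icc 1 N).filter (fun n => n % q = r % q), f n
      = ∑ n ∈ Finset.Icc 1 N, f n := by
  have h : ∀ n ∈ Finset.Icc 1 N, (if n % q = 0 then q else n % q) ∈ Finset.Icc 1 q := by
    intro n _
    have : n % q < q := Nat.mod_lt _ hq
    split <;> simp <;> omega
  rw [← Finset.sum_fiberwise_of_maps_to h f]
  refine Finset.sum_congr rfl fun r hr => ?_
  refine Finset.sum_congr (Finset.filter_congr fun n hn => ?_) fun _ _ => rfl
  simp only [Finset.mem_Icc] at hr hn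
  have hnq : n % q < q := Nat.mod_lt _ hq
  rcases eq_or_lt_of_le hr.2 with h1 | h1
  · subst h1
    rw [Nat.mod_self]
    constructor
    · intro h; simp [h]
    · intro h; by_contra hc; rw [if_neg hc] at h; omega
  · rw [Nat.mod_eq_of_lt h1]
    constructor
    · intro h; rw [h, if_neg (by omega)]
    · intro h; by_contra hc
      by_cases h0 : n % q = 0
      · rw [if_pos h0] at h; omega
      · rw [if_neg h0] at h; omega

lemma card_fiber (q N c : ℕ) (hq : 1 ≤ q) :
    q * ((Finset.Icc 1 N).filter (fun n => n % q = c)).card ≤ N + q := by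
  have hcard : ((Finset.Icc 1 N).filter (fun n => n % q = c)).card ≤ N / q + 1 := by
    have := Finset.card_le_card_of_injOn (fun n => n / q)
      (s := (Finset.Icc 1 N).filter (fun n => n % q = c)) (t := Finset.Icc 0 (N / q))
      (fun n hn => by
        simp only [Finset.coe_filter, Set.mem_setOf_eq, Finset.mem_coe, Finset.mem_filter, Finset.mem_Icc] at hn ⊢
        exact ⟨Nat.zero_le _, Nat.div_le_div_right hn.1.2⟩)
      (fun n hn m hm hnm => by
        simp only [Finset.coe_filter, Set.mem_setOf_eq, Finset.mem_Icc] at hn hm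
        have hnm' : n / q = m / q := hnm
        have h1 := Nat.div_add_mod n q
        have h2 := Nat.div_add_mod m q
        rw [← hnm'] at h2
        have h3 : n % q = m % q := hn.2.trans hm.2.symm
        omega)
    simpa [Nat.card_Icc] using this
  calc q * ((Finset.Icc 1 N).filter (fun n => n % q = c)).card
      ≤ q * (N / q + 1) := Nat.mul_le_mul_left _ hcard
    _ = q * (N / q) + q := by ring
    _ ≤ N + q := by have := Nat.mul_div_le N q; omega

theorem large_sieve_inequality (x Q : ℝ) (hx : 1 ≤ x) (hQ1 : 1 ≤ Q) (hQx : Q ≤ x)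
    (a : ℕ → ℝ) :
    ∑ q ∈ Finset.Icc 1 ⌊Q⌋₊, (q : ℝ) *
        ∑ r ∈ Finset.Icc 1 q,
          |(∑ n ∈ (Finset.Icc 1 ⌊x⌋₊).filter (fun n => n % q = r % q), a n) -
            (1 / (q : ℝ)) * ∑ n ∈ Finset.Icc 1 ⌊x⌋₊, a n| ^ 2 ≤
      Q * (10 * Q + 2 * Real.pi * x) * ∑ n ∈ Finset.Icc 1 ⌊x⌋₊, a n ^ 2 := by
  set N := ⌊x⌋₊ with hN
  set A := ∑ n ∈ Finset.Icc 1 N, a n ^ 2 with hA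
  set S := ∑ n ∈ Finset.Icc 1 N, a n with hS
  have hA0 : 0 ≤ A := Finset.sum_nonneg fun n _ => sq_nonneg _
  have hxN : (N : ℝ) ≤ x := Nat.floor_le (by linarith)
  have hQN : (⌊Q⌋₊ : ℝ) ≤ Q := Nat.floor_le (by linarith)
  -- Cauchy–Schwarz on all of [1, N]
  have hS2 : S ^ 2 ≤ x * A := by
    calc S ^ 2 ≤ ((Finset.Icc 1 N).card : ℝ) * A := by
          exact sq_sum_le_card_mul_sum_sq
      _ = (N : ℝ) * A := by rw [Nat.card_Icc]; simp
      _ ≤ x * A := mul_le_mul_of_nonneg_right hxN hA0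
  have hstep : ∀ q ∈ Finset.Icc 1 ⌊Q⌋₊,
      (q : ℝ) * ∑ r ∈ Finset.Icc 1 q,
          |(∑ n ∈ (Finset.Icc 1 N).filter (fun n => n % q = r % q), a n) -
            (1 / (q : ℝ)) * S| ^ 2 ≤ (4 * x + 2 * Q) * A := by
    intro q hq
    rw [Finset.mem_Icc] at hq
    have hq1 : 1 ≤ q := hq.1
    have hq0 : (0 : ℝ) < q := by exact_mod_cast hq1
    have hqQ : (q : ℝ) ≤ Q := le_trans (by exact_mod_cast Nat.le_floor_iff' (by omega) |>.mp hq.2) le_rfl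
    set Sr := fun r => ∑ n ∈ (Finset.Icc 1 N).filter (fun n => n % q = r % q), a n with hSr
    set Ar := fun r => ∑ n ∈ (Finset.Icc 1 N).filter (fun n => n % q = r % q), a n ^ 2 with hAr
    have hArsum : ∑ r ∈ Finset.Icc 1 q, Ar r = A := fiber_sum q N hq1 _
    have hAr0 : ∀ r, 0 ≤ Ar r := fun r => Finset.sum_nonneg fun n _ => sq_nonneg _
    -- per-residue Cauchy–Schwarz with fiber count
    have hqSr : ∀ r ∈ Finset.Icc 1 q, (q : ℝ) * (Sr r) ^ 2 ≤ (x + q) * Ar r := by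
      intro r _
      have hcs : (Sr r) ^ 2 ≤
          (((Finset.Icc 1 N).filter (fun n => n % q = r % q)).card : ℝ) * Ar r := by
        exact sq_sum_le_card_mul_sum_sq
      have hcf : (q : ℝ) * (((Finset.Icc 1 N).filter (fun n => n % q = r % q)).card : ℝ)
          ≤ (N : ℝ) + q := by exact_mod_cast card_fiber q N (r % q) hq1
      calc (q : ℝ) * (Sr r) ^ 2 ≤ (q : ℝ) *
            ((((Finset.Icc 1 N).filter (fun n => n % q = r % q)).card : ℝ) * Ar r) :=
            mul_le_mul_of_nonneg_left hcs hq0.le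
        _ = ((q : ℝ) * (((Finset.Icc 1 N).filter (fun n => n % q = r % q)).card : ℝ)) * Ar r := by
            ring
        _ ≤ ((N : ℝ) + q) * Ar r := mul_le_mul_of_nonneg_right hcf (hAr0 r)
        _ ≤ (x + q) * Ar r := mul_le_mul_of_nonneg_right (by linarith) (hAr0 r)
    have h1 : ∑ r ∈ Finset.Icc 1 q, |Sr r - (1 / (q : ℝ)) * S| ^ 2 ≤
        ∑ r ∈ Finset.Icc 1 q, (2 * (Sr r) ^ 2 + 2 * ((1 / (q : ℝ)) * S) ^ 2) := by
      refine Finset.sum_le_sum fun r _ => ?_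
      rw [sq_abs]
      nlinarith [sq_nonneg (Sr r + (1 / (q : ℝ)) * S)]
    have h2 : ∑ r ∈ Finset.Icc 1 q, (2 * (Sr r) ^ 2 + 2 * ((1 / (q : ℝ)) * S) ^ 2) =
        2 * (∑ r ∈ Finset.Icc 1 q, (Sr r) ^ 2) + (q : ℝ) * (2 * ((1 / (q : ℝ)) * S) ^ 2) := by
      rw [Finset.sum_add_distrib, Finset.sum_const, ← Finset.mul_sum, Nat.card_Icc]
      simp [nsmul_eq_mul]
    have h3 : (q : ℝ) * ∑ r ∈ Finset.Icc 1 q, (Sr r) ^ 2 ≤ (x + q) * A := by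
      calc (q : ℝ) * ∑ r ∈ Finset.Icc 1 q, (Sr r) ^ 2
          = ∑ r ∈ Finset.Icc 1 q, (q : ℝ) * (Sr r) ^ 2 := Finset.mul_sum _ _ _
        _ ≤ ∑ r ∈ Finset.Icc 1 q, (x + q) * Ar r := Finset.sum_le_sum hqSr
        _ = (x + q) * A := by rw [← Finset.mul_sum, hArsum]
    have hkey : (q : ℝ) * ((q : ℝ) * (2 * ((1 / (q : ℝ)) * S) ^ 2)) = 2 * S ^ 2 := by
      field_simp
    calc (q : ℝ) * ∑ r ∈ Finset.Icc 1 q, |Sr r - (1 / (q : ℝ)) * S| ^ 2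
        ≤ (q : ℝ) * (2 * (∑ r ∈ Finset.Icc 1 q, (Sr r) ^ 2) +
            (q : ℝ) * (2 * ((1 / (q : ℝ)) * S) ^ 2)) := by
          refine mul_le_mul_of_nonneg_left ?_ hq0.le
          rw [← h2]; exact h1
      _ = 2 * ((q : ℝ) * ∑ r ∈ Finset.Icc 1 q, (Sr r) ^ 2) + 2 * S ^ 2 := by
          rw [mul_add, hkey]; ring
      _ ≤ 2 * ((x + q) * A) + 2 * (x * A) := by
          have := mul_le_mul_of_nonneg_left h3 (by norm_num : (0:ℝ) ≤ 2)
          linarith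
      _ ≤ (4 * x + 2 * Q) * A := by nlinarith
  calc ∑ q ∈ Finset.Icc 1 ⌊Q⌋₊, (q : ℝ) *
        ∑ r ∈ Finset.Icc 1 q,
          |(∑ n ∈ (Finset.Icc 1 N).filter (fun n => n % q = r % q), a n) -
            (1 / (q : ℝ)) * S| ^ 2
      ≤ ∑ _q ∈ Finset.Icc 1 ⌊Q⌋₊, (4 * x + 2 * Q) * A := Finset.sum_le_sum hstep
    _ = (⌊Q⌋₊ : ℝ) * ((4 * x + 2 * Q) * A) := by
        rw [Finset.sum_const, Nat.card_Icc]; simp [nsmul_eq_mul]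
    _ ≤ Q * ((4 * x + 2 * Q) * A) := by
        refine mul_le_mul_of_nonneg_right hQN ?_
        positivity
    _ ≤ Q * (10 * Q + 2 * Real.pi * x) * A := by
        have hpi := Real.pi_gt_three
        nlinarith [mul_le_mul_of_nonneg_left hA0 (mul_nonneg (by linarith : (0:ℝ) ≤ Q) (by nlinarith : (0:ℝ) ≤ (10 * Q + 2 * Real.pi * x) - (4*x+2*Q)))]
end
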